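/- Let (U_n)_{n≥0} be a SVLMC defined by a probabilized context tree (T,(q_c)_{c∈C}) and let π be any stationary probability measure on L. Then for every finite word w = α₁…α_N over A, π(w) = ∏_{k=0}^{N−1} q_{pref(α₁…α_k)}(α_{k+1}), where for k = 0 the word α₁…α_k is the empty word ∅, pref(∅) = ∅, q_∅(α) = π(α) and π(∅) = π(L) = 1. -/

import Mathlib

open MeasureTheory
open ProbabilityTheory (Kernel IsMarkovKernel)
open scoped ENNReal

namespace VLMC

/-- Left-infinite sequences over the alphabet `{0,1}`; `s 0` is the rightmost
(most recent) letter, `s 1` the one before it, etc. -/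
abbrev L : Type := ℕ → Bool

/-- Append the letter `b` on the right of the left-infinite sequence `s`. -/
def extend (b : Bool) (s : L) : L := fun n => match n with
  | 0 => b
  | k + 1 => s k

/-- Sequences whose letters, read from the rightmost one leftwards, start with `u`. -/
def cylRev (u : List Bool) : Set L := {s | ∀ i < u.length, s i = u.getD i false}

/-- The cylinder `Lw` of left-infinite sequences admitting the finite word `w` as a suffix. -/
def cyl (w : List Bool) : Set L := cylRev w.reverse

/-- A (saturated) context tree: a prefix-closed set of finite words containing the
empty word, in which every node having one child has both children. A node
`[α₁, …, α_N]` corresponds to the word `α₁…α_N`, matched against a left-infinite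
sequence `s` via `s 0 = α₁, …, s (N-1) = α_N`. -/
def IsContextTree (T : List Bool → Prop) : Prop :=
  T [] ∧ (∀ u b, T (u ++ [b]) → T u) ∧ (∀ u b, T (u ++ [b]) → T (u ++ [!b]))

/-- Finite leaves (finite contexts) of a context tree. -/
def IsLeaf (T : List Bool → Prop) (c : List Bool) : Prop :=
  T c ∧ ∀ b, ¬ T (c ++ [b])

/-- Infinite leaves (infinite contexts), seen as the left-infinite sequences they match. -/
def IsInfLeaf (T : List Bool → Prop) (s : L) : Prop :=
  ∀ n, T (List.ofFn fun i : Fin n => s i)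

/-- `κ` is the transition kernel of the VLMC associated with the probabilized
context tree `(T, qF, qI)` : from a state `s` whose context is the finite leaf `c`
(resp. an infinite leaf), a letter `α` is appended on the right with probability
`qF c α` (resp. `qI s α`). -/
def IsVLMCKernel (T : List Bool → Prop) (qF : List Bool → Bool → ℝ≥0∞)
    (qI : L → Bool → ℝ≥0∞) (κ : Kernel L L) : Prop :=
  (∀ c, IsLeaf T c → ∀ s ∈ cylRev c,
      κ s = qF c false • Measure.dirac (extend false s)
          + qF c true • Measure.dirac (extend true s)) ∧
  (∀ s, IsInfLeaf T s →
      κ s = qI s false • Measure.dirac (extend false s)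
          + qI s true • Measure.dirac (extend true s))

/-- `π` is a stationary (invariant) probability measure for the kernel `κ`. -/
def IsStationary (κ : Kernel L L) (π : Measure L) : Prop :=
  ∀ B : Set L, MeasurableSet B → π B = ∫⁻ s, κ s B ∂π


attribute [local instance] Classical.propDecidable

/-- The context associated with a finite word `w` whose reversed word is not an
internal node : the unique finite context `c` such that `c̄` is a suffix of `w`
(junk value `[]` if there is none). -/
noncomputable def prefLeafWord (T : List Bool → Prop) (w : List Bool) : List Bool :=
  if h : ∃ c, IsLeaf T c ∧ c <+: w.reverse then h.choose else []

/-- The one-step conditional probability `q_{pref(w)}(b)` : if `w̄` is an internal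
node of the tree, it is `π(wb)/π(w)` (and `0` if `π(w) = 0`); otherwise it is
`q_c(b)` for the unique context `c` whose reversed word is a suffix of `w`. -/
noncomputable def qext (T : List Bool → Prop) (qF : List Bool → Bool → ℝ≥0∞)
    (π : Measure L) (w : List Bool) (b : Bool) : ℝ≥0∞ :=
  if T w.reverse ∧ (∃ b', T (w.reverse ++ [b'])) then
    (if π (cyl w) = 0 then 0 else π (cyl (w ++ [b])) / π (cyl w))
  else qF (prefLeafWord T w) b

attribute [local instance] Classical.propDecidable

lemma measurableSet_cylRev (v : List Bool) : MeasurableSet (cylRev v) := by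
  have h : cylRev v = ⋂ i, ⋂ (_ : i < v.length), (fun s : L => s i) ⁻¹' {v.getD i false} := by
    ext s
    simp only [cylRev, Set.mem_iInter, Set.mem_preimage, Set.mem_singleton_iff, Set.mem_setOf_eq]
  rw [h]
  exact MeasurableSet.iInter fun i => MeasurableSet.iInter fun _ =>
    measurable_pi_apply i (measurableSet_singleton _)

lemma measurableSet_cyl (w : List Bool) : MeasurableSet (cyl w) := measurableSet_cylRev _

lemma eq_ofFn_of_mem_cylRev {s : L} {v : List Bool} (h : s ∈ cylRev v) :
    v = List.ofFn fun i : Fin v.length => s i := by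
  apply List.ext_getElem (by simp)
  intro n h1 h2
  rw [List.getElem_ofFn]
  have hh := h n h1
  rw [List.getD_eq_getElem v false h1] at hh
  exact hh.symm

lemma mem_cylRev_ofFn (s : L) (n : ℕ) : s ∈ cylRev (List.ofFn fun i : Fin n => s i) := by
  intro i hi
  have hi' : i < n := by simpa using hi
  rw [List.getD_eq_getElem _ false (by simpa using hi'), List.getElem_ofFn]

lemma ofFn_succ_eq (s : L) (k : ℕ) :
    (List.ofFn fun i : Fin (k+1) => s i) = (List.ofFn fun i : Fin k => s i) ++ [s k] := by
  rw [List.ofFn_succ']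
  simp [List.concat_eq_append]

lemma ofFn_prefix_ofFn (s : L) {n m : ℕ} (h : n ≤ m) :
    (List.ofFn fun i : Fin n => s i) <+: (List.ofFn fun i : Fin m => s i) := by
  rw [List.prefix_iff_eq_take]
  apply List.ext_getElem (by simp [h])
  intro k h1 h2
  simp [List.getElem_take]

lemma prefix_or_prefix_of_mem {s : L} {v₁ v₂ : List Bool} (h1 : s ∈ cylRev v₁)
    (h2 : s ∈ cylRev v₂) : v₁ <+: v₂ ∨ v₂ <+: v₁ := by
  rw [eq_ofFn_of_mem_cylRev h1, eq_ofFn_of_mem_cylRev h2]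
  rcases le_total v₁.length v₂.length with h | h
  · exact Or.inl (ofFn_prefix_ofFn s h)
  · exact Or.inr (ofFn_prefix_ofFn s h)

lemma mem_of_prefix {T : List Bool → Prop} (hT : IsContextTree T) :
    ∀ v, T v → ∀ u, u <+: v → T u := by
  intro v
  induction v using List.reverseRecOn with
  | nil => intro hv u hu; rwa [List.prefix_nil.mp hu]
  | append_singleton v b ih =>
    intro hv u hu
    rcases List.prefix_concat_iff.mp hu with h | h
    · exact h ▸ hv
    · exact ih (hT.2.1 v b hv) u h

lemma leaf_eq_of_prefix {T : List Bool → Prop} (hT : IsContextTree T) {c v : List Bool}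
    (hc : IsLeaf T c) (hcv : c <+: v) (hv : T v) : c = v := by
  obtain ⟨t, rfl⟩ := hcv
  cases t with
  | nil => simp
  | cons x t' =>
    exact absurd (mem_of_prefix hT _ hv (c ++ [x]) ⟨t', by simp⟩) (hc.2 x)

lemma leaf_unique {T : List Bool → Prop} (hT : IsContextTree T) {c₁ c₂ v : List Bool}
    (h₁ : IsLeaf T c₁) (h₂ : IsLeaf T c₂) (p₁ : c₁ <+: v) (p₂ : c₂ <+: v) : c₁ = c₂ := by
  rcases List.prefix_or_prefix_of_prefix p₁ p₂ with h | h
  · exact leaf_eq_of_prefix hT h₁ h h₂.1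
  · exact (leaf_eq_of_prefix hT h₂ h h₁.1).symm

lemma exists_leaf_or_infLeaf {T : List Bool → Prop} (hT : IsContextTree T) (s : L) :
    (∃ c, IsLeaf T c ∧ s ∈ cylRev c) ∨ IsInfLeaf T s := by
  by_cases h : ∀ n, T (List.ofFn fun i : Fin n => s i)
  · exact Or.inr h
  · left
    push_neg at h
    obtain ⟨n, hn⟩ := h
    have key : ∀ n, ¬ T (List.ofFn fun i : Fin n => s i) →
        ∃ k, T (List.ofFn fun i : Fin k => s i) ∧ ¬ T (List.ofFn fun i : Fin (k+1) => s i) := by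
      intro n
      induction n with
      | zero => intro hn0; exact absurd (by simpa using hT.1) hn0
      | succ m ih =>
        intro hn0
        by_cases hm : T (List.ofFn fun i : Fin m => s i)
        · exact ⟨m, hm, hn0⟩
        · exact ih hm
    obtain ⟨k, hk1, hk2⟩ := key n hn
    refine ⟨List.ofFn fun i : Fin k => s i, ⟨hk1, ?_⟩, mem_cylRev_ofFn s k⟩
    have hnot : ¬ T ((List.ofFn fun i : Fin k => s i) ++ [s k]) := by
      rw [← ofFn_succ_eq]; exact hk2
    intro b hTb
    by_cases hb : b = s k
    · exact hnot (hb ▸ hTb)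
    · have hb' : (!b) = s k := by
        cases b <;> cases hq : s k <;> first | rfl | exact absurd hq.symm hb
      exact hnot (hb' ▸ hT.2.2 _ b hTb)

lemma extend_mem_cyl_concat {s : L} {u : List Bool} {α b : Bool} :
    extend α s ∈ cyl (u ++ [b]) ↔ α = b ∧ s ∈ cyl u := by
  have hrev : (u ++ [b]).reverse = b :: u.reverse := by simp
  simp only [cyl, hrev]
  constructor
  · intro h
    have h0 : α = b := by simpa [extend] using h 0 (by simp)
    refine ⟨h0, fun i hi => ?_⟩
    have hlt : i + 1 < (b :: u.reverse).length := by
      simp only [List.length_cons]; omega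
    simpa [extend, List.getD_cons_succ] using h (i+1) hlt
  · rintro ⟨rfl, hs⟩ i hi
    cases i with
    | zero => simp [extend]
    | succ j =>
      simp only [List.length_cons] at hi
      have := hs j (Nat.lt_of_succ_lt_succ hi)
      simpa [extend, List.getD_cons_succ] using this

lemma kernel_apply_concat {κ : Kernel L L} {s : L} {q : Bool → ℝ≥0∞}
    (hs : κ s = q false • Measure.dirac (extend false s) + q true • Measure.dirac (extend true s))
    (u : List Bool) (b : Bool) :
    κ s (cyl (u ++ [b])) = if s ∈ cyl u then q b else 0 := by
  rw [hs]
  have hm := measurableSet_cyl (u ++ [b])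
  simp only [Measure.coe_add, Measure.coe_smul, Pi.add_apply, Pi.smul_apply, smul_eq_mul,
    Measure.dirac_apply' _ hm]
  by_cases hcu : s ∈ cyl u
  · cases b
    · have h1 : extend false s ∈ cyl (u ++ [false]) := extend_mem_cyl_concat.mpr ⟨rfl, hcu⟩
      have h2 : extend true s ∉ cyl (u ++ [false]) := fun h => by
        simpa using (extend_mem_cyl_concat.mp h).1
      simp [Set.indicator_of_mem h1, Set.indicator_of_notMem h2, hcu]
    · have h1 : extend true s ∈ cyl (u ++ [true]) := extend_mem_cyl_concat.mpr ⟨rfl, hcu⟩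
      have h2 : extend false s ∉ cyl (u ++ [true]) := fun h => by
        simpa using (extend_mem_cyl_concat.mp h).1
      simp [Set.indicator_of_mem h1, Set.indicator_of_notMem h2, hcu]
  · have h1 : extend false s ∉ cyl (u ++ [b]) := fun h => hcu (extend_mem_cyl_concat.mp h).2
    have h2 : extend true s ∉ cyl (u ++ [b]) := fun h => hcu (extend_mem_cyl_concat.mp h).2
    simp [Set.indicator_of_notMem h1, Set.indicator_of_notMem h2, hcu]

lemma prefLeafWord_eq {T : List Bool → Prop} (hT : IsContextTree T) {u c : List Bool}
    (hc : IsLeaf T c) (hcu : c <+: u.reverse) : prefLeafWord T u = c := by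
  have h : ∃ c', IsLeaf T c' ∧ c' <+: u.reverse := ⟨c, hc, hcu⟩
  rw [prefLeafWord, dif_pos h]
  exact leaf_unique hT h.choose_spec.1 hc h.choose_spec.2 hcu

lemma step (T : List Bool → Prop) (qF : List Bool → Bool → ℝ≥0∞) (qI : L → Bool → ℝ≥0∞)
    (hT : IsContextTree T)
    (hqF : ∀ c, IsLeaf T c → qF c false + qF c true = 1)
    (hqI : ∀ s, IsInfLeaf T s → qI s false + qI s true = 1)
    (κ : Kernel L L) (hκ : IsVLMCKernel T qF qI κ)
    (π : Measure L) [IsProbabilityMeasure π] (hπ : IsStationary κ π)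
    (u : List Bool) (b : Bool) :
    π (cyl (u ++ [b])) = π (cyl u) * qext T qF π u b := by
  by_cases hint : T u.reverse ∧ (∃ b', T (u.reverse ++ [b']))
  · rw [qext, if_pos hint]
    by_cases h0 : π (cyl u) = 0
    · rw [if_pos h0, mul_zero]
      refine le_antisymm ?_ (zero_le)
      have hb : ∀ s, κ s (cyl (u ++ [b])) ≤ (cyl u).indicator 1 s := by
        intro s
        rcases exists_leaf_or_infLeaf hT s with ⟨c, hc, hsc⟩ | hinf
        · rw [kernel_apply_concat (hκ.1 c hc s hsc) u b]
          split
          · next h =>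
              rw [Set.indicator_of_mem h]
              calc qF c b ≤ qF c false + qF c true := by
                    cases b
                    · exact le_self_add
                    · exact le_add_self
                _ = 1 := hqF c hc
          · exact zero_le
        · rw [kernel_apply_concat (hκ.2 s hinf) u b]
          split
          · next h =>
              rw [Set.indicator_of_mem h]
              calc qI s b ≤ qI s false + qI s true := by
                    cases b
                    · exact le_self_add
                    · exact le_add_self
                _ = 1 := hqI s hinf
          · exact zero_le
      calc π (cyl (u ++ [b])) = ∫⁻ s, κ s (cyl (u ++ [b])) ∂π := hπ _ (measurableSet_cyl _)
        _ ≤ ∫⁻ s, (cyl u).indicator 1 s ∂π := lintegral_mono hb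
        _ = π (cyl u) := by
            rw [lintegral_indicator (measurableSet_cyl u)]; simp
        _ = 0 := h0
    · rw [if_neg h0, mul_comm]
      exact (ENNReal.div_mul_cancel h0 (measure_ne_top π _)).symm
  · rw [qext, if_neg hint]
    have hpt : ∀ s, κ s (cyl (u ++ [b]))
        = (cyl u).indicator (fun _ => qF (prefLeafWord T u) b) s := by
      intro s
      rcases exists_leaf_or_infLeaf hT s with ⟨c, hc, hsc⟩ | hinf
      · rw [kernel_apply_concat (hκ.1 c hc s hsc) u b]
        by_cases hsu : s ∈ cyl u
        · rw [if_pos hsu, Set.indicator_of_mem hsu]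
          have hsu' : s ∈ cylRev u.reverse := hsu
          have hcomp := prefix_or_prefix_of_mem hsc hsu'
          have hcu : c <+: u.reverse := by
            rcases hcomp with h | h
            · exact h
            · have hTu : T u.reverse := mem_of_prefix hT c hc.1 _ h
              obtain ⟨t, ht⟩ := h
              cases t with
              | nil => rw [← ht]; simp
              | cons x t' =>
                exfalso
                exact hint ⟨hTu, x, mem_of_prefix hT c hc.1 (u.reverse ++ [x])
                  ⟨t', by rw [← ht]; simp⟩⟩
          rw [prefLeafWord_eq hT hc hcu]
        · rw [if_neg hsu, Set.indicator_of_notMem hsu]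
      · rw [kernel_apply_concat (hκ.2 s hinf) u b]
        have hsu : s ∉ cyl u := by
          intro hsu
          apply hint
          have hrev : u.reverse = List.ofFn fun i : Fin u.reverse.length => s i :=
            eq_ofFn_of_mem_cylRev hsu
          refine ⟨by rw [hrev]; exact hinf _, s u.reverse.length, ?_⟩
          have h2 := hinf (u.reverse.length + 1)
          rw [ofFn_succ_eq] at h2
          rw [hrev]
          simpa using h2
        rw [if_neg hsu, Set.indicator_of_notMem hsu]
    calc π (cyl (u ++ [b])) = ∫⁻ s, κ s (cyl (u ++ [b])) ∂π := hπ _ (measurableSet_cyl _)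
      _ = ∫⁻ s, (cyl u).indicator (fun _ => qF (prefLeafWord T u) b) s ∂π :=
          lintegral_congr hpt
      _ = qF (prefLeafWord T u) b * π (cyl u) := by
          rw [lintegral_indicator (measurableSet_cyl u), setLIntegral_const]
      _ = π (cyl u) * qF (prefLeafWord T u) b := mul_comm _ _

/-- For a SVLMC with stationary probability measure `π`,
for every finite word `w = α₁…α_N`,
`π(w) = ∏_{k=0}^{N-1} q_{pref(α₁…α_k)}(α_{k+1})`. -/
theorem stationary_product_formula
    (T : List Bool → Prop) (qF : List Bool → Bool → ℝ≥0∞) (qI : L → Bool → ℝ≥0∞)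
    (hT : IsContextTree T)
    (hcount : Set.Countable {s : L | IsInfLeaf T s})
    (hqF : ∀ c, IsLeaf T c → qF c false + qF c true = 1)
    (hqI : ∀ s, IsInfLeaf T s → qI s false + qI s true = 1)
    (κ : Kernel L L) [IsMarkovKernel κ] (hκ : IsVLMCKernel T qF qI κ)
    (π : Measure L) [IsProbabilityMeasure π] (hπ : IsStationary κ π)
    (w : List Bool) :
    π (cyl w) = ∏ k ∈ Finset.range w.length, qext T qF π (w.take k) (w.getD k false) := by
  induction w using List.reverseRecOn with
  | nil =>
    have h : cyl [] = Set.univ := by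
      ext s; simp [cyl, cylRev]
    simp [h]
  | append_singleton u b ih =>
    rw [List.length_append, List.length_singleton, Finset.prod_range_succ]
    have hlast1 : (u ++ [b]).take u.length = u := List.take_left
    have hlast2 : (u ++ [b]).getD u.length false = b := by
      rw [List.getD_eq_getElem _ _ (by simp)]; simp
    rw [hlast1, hlast2]
    have hf : ∀ k ∈ Finset.range u.length,
        qext T qF π ((u ++ [b]).take k) ((u ++ [b]).getD k false)
          = qext T qF π (u.take k) (u.getD k false) := by
      intro k hk
      rw [Finset.mem_range] at hk
      rw [List.take_append_of_le_length hk.le, List.getD_append _ _ _ _ hk]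
    rw [Finset.prod_congr rfl hf, ← ih, step T qF qI hT hqF hqI κ hκ π hπ]


end VLMC
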